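/- Let A and B be Hermitian operators on a finite-dimensional Hilbert space and F a positive trace-preserving linear map. Then Tr(F(A)₊) ≤ Tr(A₊), where X₊ denotes the positive part of the Hermitian operator X. -/

import Mathlib

open Matrix
open scoped ComplexOrder

open Classical in
/-- The positive part `A₊` of a Hermitian matrix `A`, defined via the spectral
decomposition (and `0` if `A` is not Hermitian). -/
noncomputable def posPartOf {n : Type*} [Fintype n] [DecidableEq n] (A : Matrix n n ℂ) :
    Matrix n n ℂ :=
  if hA : A.IsHermitian then
    (hA.eigenvectorUnitary : Matrix n n ℂ) *
      Matrix.diagonal (fun i => ((max (hA.eigenvalues i) 0 : ℝ) : ℂ)) *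
      (star (hA.eigenvectorUnitary : Matrix n n ℂ))
  else 0

open Classical in
/-- The negative part `A₋` of a Hermitian matrix `A` (so that `A = A₊ - A₋`). -/
noncomputable def negPartOf {n : Type*} [Fintype n] [DecidableEq n] (A : Matrix n n ℂ) :
    Matrix n n ℂ :=
  if hA : A.IsHermitian then
    (hA.eigenvectorUnitary : Matrix n n ℂ) *
      Matrix.diagonal (fun i => ((max (-(hA.eigenvalues i)) 0 : ℝ) : ℂ)) *
      (star (hA.eigenvectorUnitary : Matrix n n ℂ))
  else 0

open Classical in
/-- The spectral projection `{A > 0}` onto the strictly positive eigenspaces of a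
Hermitian matrix `A` (and `0` if `A` is not Hermitian). -/
noncomputable def posProjOf {n : Type*} [Fintype n] [DecidableEq n] (A : Matrix n n ℂ) :
    Matrix n n ℂ :=
  if hA : A.IsHermitian then
    (hA.eigenvectorUnitary : Matrix n n ℂ) *
      Matrix.diagonal (fun i => if 0 < hA.eigenvalues i then (1 : ℂ) else 0) *
      (star (hA.eigenvectorUnitary : Matrix n n ℂ))
  else 0

open Classical in
/-- The trace norm of a Hermitian matrix: the sum of absolute values of eigenvalues. -/
noncomputable def traceNormOf {n : Type*} [Fintype n] [DecidableEq n] (A : Matrix n n ℂ) : ℝ :=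
  if hA : A.IsHermitian then ∑ i, |hA.eigenvalues i| else 0

section Helpers

variable {n : Type*} [Fintype n] [DecidableEq n]

lemma conj_diag_mul (U : Matrix n n ℂ) (hU : star U * U = 1) (f g : n → ℂ) :
    (U * diagonal f * star U) * (U * diagonal g * star U) =
      U * diagonal (fun i => f i * g i) * star U := by
  calc (U * diagonal f * star U) * (U * diagonal g * star U)
      = U * diagonal f * (star U * U) * diagonal g * star U := by
        simp only [mul_assoc]
    _ = _ := by rw [hU, mul_one, mul_assoc U, diagonal_mul_diagonal]

lemma conj_diag_sub (U : Matrix n n ℂ) (f g : n → ℂ) :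
    (U * diagonal f * star U) - (U * diagonal g * star U) =
      U * diagonal (fun i => f i - g i) * star U := by
  have : diagonal (fun i => f i - g i) = diagonal f - diagonal g := by
    rw [diagonal_sub]
  rw [this, mul_sub, sub_mul]

lemma conj_diag_psd (U : Matrix n n ℂ) (f : n → ℂ) (hf : ∀ i, 0 ≤ f i) :
    (U * diagonal f * star U).PosSemidef := by
  exact (Matrix.PosSemidef.diagonal hf).mul_mul_conjTranspose_same U

lemma trace_re_nonneg_of_psd {X : Matrix n n ℂ} (hX : X.PosSemidef) : 0 ≤ X.trace.re := by
  rw [Matrix.trace, Complex.re_sum]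
  refine Finset.sum_nonneg fun i _ => ?_
  have h := hX.dotProduct_mulVec_nonneg (Pi.single i 1)
  have heq : star (Pi.single i 1 : n → ℂ) ⬝ᵥ X *ᵥ Pi.single i 1 = X.diag i := by
    simp [Matrix.diag, dotProduct, Pi.single_apply, apply_ite (star : ℂ → ℂ)]
  rw [heq] at h
  exact (Complex.le_def.mp h).1

open scoped MatrixOrder in
lemma trace_mul_re_nonneg {X Y : Matrix n n ℂ} (hX : X.PosSemidef) (hY : Y.PosSemidef) :
    0 ≤ (X * Y).trace.re := by
  have hS := (CFC.sqrt_nonneg X).posSemidef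
  have h1 : X * Y = CFC.sqrt X * (CFC.sqrt X * Y) := by rw [← mul_assoc, CFC.sqrt_mul_sqrt_self X hX.nonneg]
  have h2 : (X * Y).trace = (CFC.sqrt X * Y * CFC.sqrt X).trace := by
    rw [h1, Matrix.trace_mul_comm]
  rw [h2]
  have hpsd : (CFC.sqrt X * Y * CFC.sqrt X).PosSemidef := by
    have := hY.mul_mul_conjTranspose_same (CFC.sqrt X)
    rwa [hS.1] at this
  exact trace_re_nonneg_of_psd hpsd

variable {A : Matrix n n ℂ}

lemma posPartOf_eq_mul_posProjOf (hA : A.IsHermitian) :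
    posPartOf A = A * posProjOf A := by
  classical
  rw [posPartOf, posProjOf, dif_pos hA, dif_pos hA]
  set U := (hA.eigenvectorUnitary : Matrix n n ℂ) with hUdef
  have hU : star U * U = 1 := Unitary.coe_star_mul_self hA.eigenvectorUnitary
  calc U * diagonal (fun i => ((max (hA.eigenvalues i) 0 : ℝ) : ℂ)) * star U
      = (U * diagonal (RCLike.ofReal ∘ hA.eigenvalues) * star U) *
          (U * diagonal (fun i => if 0 < hA.eigenvalues i then (1 : ℂ) else 0) * star U) := by
        rw [conj_diag_mul U hU]
        refine congrArg (fun D => U * D * star U) (congrArg diagonal (funext fun i => ?_))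
        by_cases h : 0 < hA.eigenvalues i
        · simp [h, max_eq_left h.le, Function.comp]
        · simp [h, max_eq_right (not_lt.mp h), Function.comp]
    _ = _ := by rw [show U * diagonal (RCLike.ofReal ∘ hA.eigenvalues) * star U = A from hA.spectral_theorem.symm]

lemma posPartOf_posSemidef (hA : A.IsHermitian) : (posPartOf A).PosSemidef := by
  classical
  rw [posPartOf, dif_pos hA]
  exact conj_diag_psd _ _ fun i => Complex.zero_le_real.mpr (le_max_right _ _)

lemma negPartOf_posSemidef (hA : A.IsHermitian) : (negPartOf A).PosSemidef := by
  classical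
  rw [negPartOf, dif_pos hA]
  exact conj_diag_psd _ _ fun i => Complex.zero_le_real.mpr (le_max_right _ _)

lemma posProjOf_posSemidef (hA : A.IsHermitian) : (posProjOf A).PosSemidef := by
  classical
  rw [posProjOf, dif_pos hA]
  refine conj_diag_psd _ _ fun i => ?_
  by_cases h : 0 < hA.eigenvalues i <;> simp [h]

lemma one_sub_posProjOf_posSemidef (hA : A.IsHermitian) :
    ((1 : Matrix n n ℂ) - posProjOf A).PosSemidef := by
  classical
  rw [posProjOf, dif_pos hA]
  set U := (hA.eigenvectorUnitary : Matrix n n ℂ) with hUdef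
  have hU : U * star U = 1 := Unitary.coe_mul_star_self hA.eigenvectorUnitary
  have h1 : (1 : Matrix n n ℂ) = U * diagonal (fun _ => 1) * star U := by
    rw [diagonal_one, mul_one, hU]
  rw [h1, conj_diag_sub]
  refine conj_diag_psd _ _ fun i => ?_
  by_cases h : 0 < hA.eigenvalues i <;> simp [h]

lemma posPartOf_sub_negPartOf (hA : A.IsHermitian) :
    posPartOf A - negPartOf A = A := by
  classical
  rw [posPartOf, negPartOf, dif_pos hA, dif_pos hA, conj_diag_sub]
  conv_rhs => rw [hA.spectral_theorem]
  refine congrArg (fun D => _ * D * _) (congrArg diagonal (funext fun i => ?_))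
  rw [← Complex.ofReal_sub, max_zero_sub_max_neg_zero_eq_self, Function.comp_apply]
  rfl

end Helpers

/-- For Hermitian matrices `A`, `B` and a positive trace-preserving linear map `F`,
`Tr (F(A))₊ ≤ Tr A₊`. -/
theorem trace_posPart_le_of_PTP {n m : Type*} [Fintype n] [DecidableEq n]
    [Fintype m] [DecidableEq m]
    (F : Matrix n n ℂ →ₗ[ℂ] Matrix m m ℂ)
    (hFpos : ∀ X : Matrix n n ℂ, X.PosSemidef → (F X).PosSemidef)
    (hFtr : ∀ X : Matrix n n ℂ, (F X).trace = X.trace)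
    (A B : Matrix n n ℂ) (hA : A.IsHermitian) (hB : B.IsHermitian) :
    ((posPartOf (F A)).trace).re ≤ ((posPartOf A).trace).re := by
  have hApos := posPartOf_posSemidef hA
  have hAneg := negPartOf_posSemidef hA
  have hsplit : F A = F (posPartOf A) - F (negPartOf A) := by
    rw [← map_sub, posPartOf_sub_negPartOf hA]
  have hFA : (F A).IsHermitian := by
    rw [hsplit]
    exact ((hFpos _ hApos).1).sub ((hFpos _ hAneg).1)
  set P := posProjOf (F A) with hP
  have hPpsd : P.PosSemidef := posProjOf_posSemidef hFA
  have h1Ppsd : ((1 : Matrix m m ℂ) - P).PosSemidef := one_sub_posProjOf_posSemidef hFA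
  have key : posPartOf (F A) = F (posPartOf A) * P - F (negPartOf A) * P := by
    rw [posPartOf_eq_mul_posProjOf hFA, ← hP, hsplit, sub_mul]
  have e1 : ((posPartOf (F A)).trace).re
      = ((F (posPartOf A) * P).trace).re - ((F (negPartOf A) * P).trace).re := by
    rw [key, Matrix.trace_sub, Complex.sub_re]
  have n1 : 0 ≤ ((F (negPartOf A) * P).trace).re :=
    trace_mul_re_nonneg (hFpos _ hAneg) hPpsd
  have n2 : 0 ≤ ((F (posPartOf A) * (1 - P)).trace).re :=
    trace_mul_re_nonneg (hFpos _ hApos) h1Ppsd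
  have e2 : ((F (posPartOf A) * (1 - P)).trace).re
      = ((F (posPartOf A)).trace).re - ((F (posPartOf A) * P).trace).re := by
    rw [mul_sub, mul_one, Matrix.trace_sub, Complex.sub_re]
  have e3 : ((F (posPartOf A)).trace).re = ((posPartOf A).trace).re := by
    rw [hFtr]
  rw [e2] at n2
  linarith
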